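/- Let P_{1,n} be the subgroup of B_{1,n} generated by the elements t, t'_1, …, t'_{n-1}, where t'_i := σ_i σ_{i-1} ⋯ σ_1 t σ_1^{-1} ⋯ σ_{i-1}^{-1} σ_i^{-1}, and let B_n be the subgroup of B_{1,n} generated by σ_1, …, σ_{n-1} (isomorphic to the Artin braid group on n strands). Then P_{1,n} is a normal subgroup of B_{1,n}, it is a free group freely generated by t, t'_1, …, t'_{n-1}, and B_{1,n} decomposes as the internal semidirect product B_{1,n} = P_{1,n} ⋊ B_n; in particular every element w of B_{1,n} can be written uniquely as a product w = v·σ with v ∈ P_{1,n} and σ ∈ B_n. -/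

import Mathlib

/-!
Knot theory related to generalized and cyclotomic Hecke algebras of type B
(S. Lambropoulou).  The Artin braid group `B_{1,n}` of type `B_n`, presented by
generators `t, σ_1, …, σ_{n-1}` and the relations
`σ_1 t σ_1 t = t σ_1 t σ_1`, `t σ_i = σ_i t` for `i > 1`,
`σ_i σ_j = σ_j σ_i` for `|i-j| > 1`, and
`σ_i σ_{i+1} σ_i = σ_{i+1} σ_i σ_{i+1}`.
-/

namespace KnotTypeB

/-- Generators of the braid group of type `B_n`: `none` is the generator `t`, while
`some i` (for `i : Fin (n-1)`) is the generator `σ_{i+1}`; this gives `σ_1, …, σ_{n-1}`. -/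
abbrev BGen (n : ℕ) := Option (Fin (n - 1))

open FreeGroup in
/-- The defining relators of the Artin braid group of type `B_n`. -/
def bRels (n : ℕ) : Set (FreeGroup (BGen n)) :=
  {r | (∃ i j : Fin (n - 1), (i : ℕ) + 1 = (j : ℕ) ∧
          r = of (some i) * of (some j) * of (some i) *
              (of (some j) * of (some i) * of (some j))⁻¹) ∨
       (∃ i j : Fin (n - 1), (i : ℕ) + 1 < (j : ℕ) ∧
          r = of (some i) * of (some j) * (of (some j) * of (some i))⁻¹) ∨
       (∃ i : Fin (n - 1), (i : ℕ) = 0 ∧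
          r = (of (none : BGen n)) * of (some i) * of (none : BGen n) * of (some i) *
              (of (some i) * of (none : BGen n) * of (some i) * of (none : BGen n))⁻¹) ∨
       (∃ i : Fin (n - 1), 0 < (i : ℕ) ∧
          r = of (none : BGen n) * of (some i) * (of (some i) * of (none : BGen n))⁻¹)}

/-- The Artin braid group `B_{1,n}` of type `B_n`. -/
abbrev B1 (n : ℕ) := PresentedGroup (bRels n)

/-- The generator `σ_i` of `B_{1,n}`, for `1 ≤ i ≤ n-1` (junk value `1` outside
this range). -/
def sigB (n i : ℕ) : B1 n :=
  if h : 1 ≤ i ∧ i ≤ n - 1 then PresentedGroup.of (some ⟨i - 1, by omega⟩) else 1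

/-- The generator `t` of `B_{1,n}`. -/
def tB (n : ℕ) : B1 n := PresentedGroup.of none

/-- The element `t'_i = σ_i σ_{i-1} ⋯ σ_1 t σ_1⁻¹ ⋯ σ_{i-1}⁻¹ σ_i⁻¹` of `B_{1,n}`,
with `t'_0 = t`. -/
def tpB (n : ℕ) : ℕ → B1 n
  | 0 => tB n
  | i + 1 => sigB n (i + 1) * tpB n i * (sigB n (i + 1))⁻¹


/-- The subgroup `P_{1,n}` of `B_{1,n}` generated by `t = t'_0, t'_1, …, t'_{n-1}`. -/
def Pn (n : ℕ) : Subgroup (B1 n) :=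
  Subgroup.closure (Set.range fun i : Fin n => tpB n (i : ℕ))

/-- The subgroup of `B_{1,n}` generated by `σ_1, …, σ_{n-1}` (a copy of the Artin braid
group `B_n` on `n` strands). -/
def BnSub (n : ℕ) : Subgroup (B1 n) :=
  Subgroup.closure {x : B1 n | ∃ i : ℕ, 1 ≤ i ∧ i ≤ n - 1 ∧ x = sigB n i}

open FreeGroup in
/-- Braid relations on `Fin m` letters. -/
def braidRels (m : ℕ) : Set (FreeGroup (Fin m)) :=
  {r | (∃ i j : Fin m, (i : ℕ) + 1 = (j : ℕ) ∧
          r = of i * of j * of i * (of j * of i * of j)⁻¹) ∨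
       (∃ i j : Fin m, (i : ℕ) + 1 < (j : ℕ) ∧
          r = of i * of j * (of j * of i)⁻¹)}

abbrev BrGroup (m : ℕ) := PresentedGroup (braidRels m)

variable {n : ℕ}

def idx (i : Fin (n - 1)) : Fin n := ⟨i, by have := i.isLt; omega⟩
def idx' (i : Fin (n - 1)) : Fin n := ⟨(i : ℕ) + 1, by have := i.isLt; omega⟩

@[simp] lemma coe_idx (i : Fin (n - 1)) : ((idx i : Fin n) : ℕ) = i := rfl
@[simp] lemma coe_idx' (i : Fin (n - 1)) : ((idx' i : Fin n) : ℕ) = i + 1 := rfl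

def aFun (i : Fin (n - 1)) : Fin n → FreeGroup (Fin n) := fun k =>
  if (k : ℕ) = i then .of (idx' i)
  else if (k : ℕ) = i + 1 then (.of (idx' i))⁻¹ * .of (idx i) * .of (idx' i)
  else .of k

def bFun (i : Fin (n - 1)) : Fin n → FreeGroup (Fin n) := fun k =>
  if (k : ℕ) = i then .of (idx i) * .of (idx' i) * (.of (idx i))⁻¹
  else if (k : ℕ) = i + 1 then .of (idx i)
  else .of k

lemma aFun_eq {i : Fin (n - 1)} {k : Fin n} (h : (k : ℕ) = i) :
    aFun i k = .of (idx' i) := by rw [aFun, if_pos h]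
lemma aFun_succ {i : Fin (n - 1)} {k : Fin n} (h : (k : ℕ) = i + 1) :
    aFun i k = (.of (idx' i))⁻¹ * .of (idx i) * .of (idx' i) := by
  rw [aFun, if_neg (by omega), if_pos h]
lemma aFun_other {i : Fin (n - 1)} {k : Fin n} (h : (k : ℕ) ≠ i) (h' : (k : ℕ) ≠ (i : ℕ) + 1) :
    aFun i k = .of k := by rw [aFun, if_neg h, if_neg h']

lemma bFun_eq {i : Fin (n - 1)} {k : Fin n} (h : (k : ℕ) = i) :
    bFun i k = .of (idx i) * .of (idx' i) * (.of (idx i))⁻¹ := by rw [bFun, if_pos h]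
lemma bFun_succ {i : Fin (n - 1)} {k : Fin n} (h : (k : ℕ) = i + 1) :
    bFun i k = .of (idx i) := by rw [bFun, if_neg (by omega), if_pos h]
lemma bFun_other {i : Fin (n - 1)} {k : Fin n} (h : (k : ℕ) ≠ i) (h' : (k : ℕ) ≠ (i : ℕ) + 1) :
    bFun i k = .of k := by rw [bFun, if_neg h, if_neg h']

lemma fin_eq_of_val {k : Fin n} {l : Fin n} (h : (k : ℕ) = (l : ℕ)) : k = l := Fin.ext h

lemma ab_id (i : Fin (n - 1)) :
    (FreeGroup.lift (aFun i)).comp (FreeGroup.lift (bFun i)) = MonoidHom.id _ := by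
  apply FreeGroup.ext_hom
  intro k
  simp only [MonoidHom.comp_apply, MonoidHom.id_apply, FreeGroup.lift_apply_of]
  by_cases h1 : (k : ℕ) = i
  · rw [bFun_eq h1]
    simp only [map_mul, map_inv, FreeGroup.lift_apply_of,
      aFun_eq (coe_idx i), aFun_succ (coe_idx' i)]
    rw [fin_eq_of_val (l := idx i) h1]
    group
  · by_cases h2 : (k : ℕ) = (i : ℕ) + 1
    · rw [bFun_succ h2, FreeGroup.lift_apply_of, aFun_eq (coe_idx i), fin_eq_of_val (l := idx' i) h2]
    · rw [bFun_other h1 h2, FreeGroup.lift_apply_of, aFun_other h1 h2]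

lemma ba_id (i : Fin (n - 1)) :
    (FreeGroup.lift (bFun i)).comp (FreeGroup.lift (aFun i)) = MonoidHom.id _ := by
  apply FreeGroup.ext_hom
  intro k
  simp only [MonoidHom.comp_apply, MonoidHom.id_apply, FreeGroup.lift_apply_of]
  by_cases h1 : (k : ℕ) = i
  · rw [aFun_eq h1, FreeGroup.lift_apply_of, bFun_succ (coe_idx' i), fin_eq_of_val (l := idx i) h1]
  · by_cases h2 : (k : ℕ) = (i : ℕ) + 1
    · rw [aFun_succ h2]
      simp only [map_mul, map_inv, FreeGroup.lift_apply_of,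
        bFun_eq (coe_idx i), bFun_succ (coe_idx' i)]
      rw [fin_eq_of_val (l := idx' i) h2]
      group
    · rw [aFun_other h1 h2, FreeGroup.lift_apply_of, bFun_other h1 h2]

/-- The automorphism of the free group corresponding to `σ_{i+1}`. -/
def act (i : Fin (n - 1)) : MulAut (FreeGroup (Fin n)) :=
  MonoidHom.toMulEquiv (FreeGroup.lift (aFun i)) (FreeGroup.lift (bFun i)) (ba_id i) (ab_id i)

lemma act_of (i : Fin (n - 1)) (k : Fin n) : act i (.of k) = aFun i k := by
  simp [act, MonoidHom.toMulEquiv]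

lemma act_of_eq {i : Fin (n - 1)} {k : Fin n} (h : (k : ℕ) = i) :
    act i (.of k) = .of (idx' i) := by rw [act_of, aFun_eq h]
lemma act_of_succ {i : Fin (n - 1)} {k : Fin n} (h : (k : ℕ) = i + 1) :
    act i (.of k) = (.of (idx' i))⁻¹ * .of (idx i) * .of (idx' i) := by rw [act_of, aFun_succ h]
lemma act_of_other {i : Fin (n - 1)} {k : Fin n} (h : (k : ℕ) ≠ i) (h' : (k : ℕ) ≠ (i : ℕ) + 1) :
    act i (.of k) = .of k := by rw [act_of, aFun_other h h']

lemma mulaut_ext {α : Type*} {e f : MulAut (FreeGroup α)}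
    (h : ∀ a, e (FreeGroup.of a) = f (FreeGroup.of a)) : e = f := by
  have : (e : FreeGroup α →* FreeGroup α) = (f : FreeGroup α →* FreeGroup α) :=
    FreeGroup.ext_hom _ _ h
  ext x
  exact DFunLike.congr_fun this x

lemma act_braid {i j : Fin (n - 1)} (h : (i : ℕ) + 1 = (j : ℕ)) :
    act (n := n) i * act j * act i = act j * act i * act j := by
  have hij : idx (n := n) j = idx' i := fin_eq_of_val (by simp [← h])
  have A1 : act (n := n) i (.of (idx i)) = .of (idx' i) := act_of_eq (coe_idx i)
  have A2 : act (n := n) i (.of (idx' i)) = (.of (idx' i))⁻¹ * .of (idx i) * .of (idx' i) :=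
    act_of_succ (coe_idx' i)
  have A3 : act (n := n) i (.of (idx' j)) = .of (idx' j) := act_of_other (by simp; omega) (by simp; omega)
  have A4 : act (n := n) j (.of (idx i)) = .of (idx i) := act_of_other (by simp; omega) (by simp; omega)
  have A5 : act (n := n) j (.of (idx' i)) = .of (idx' j) := act_of_eq (by simp [h])
  have A6 : act (n := n) j (.of (idx' j)) = (.of (idx' j))⁻¹ * .of (idx j) * .of (idx' j) :=
    act_of_succ (coe_idx' j)
  rw [hij] at A6
  apply mulaut_ext
  intro k
  simp only [MulAut.mul_apply]
  by_cases h1 : (k : ℕ) = i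
  · rw [fin_eq_of_val (l := idx i) h1]
    simp only [map_mul, map_inv, A1, A2, A3, A4, A5, A6]
  · by_cases h2 : (k : ℕ) = (i : ℕ) + 1
    · rw [fin_eq_of_val (l := idx' i) h2]
      simp only [map_mul, map_inv, A1, A2, A3, A4, A5, A6]
    · by_cases h3 : (k : ℕ) = (j : ℕ) + 1
      · rw [fin_eq_of_val (l := idx' j) h3]
        simp only [map_mul, map_inv, A1, A2, A3, A4, A5, A6]
        group
      · have B1 : act (n := n) i (.of k) = .of k := act_of_other h1 h2
        have B2 : act (n := n) j (.of k) = .of k := act_of_other (by omega) (by omega)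
        simp only [B1, B2]

lemma act_comm {i j : Fin (n - 1)} (h : (i : ℕ) + 1 < (j : ℕ)) :
    act (n := n) i * act j = act j * act i := by
  have A1 : act (n := n) i (.of (idx i)) = .of (idx' i) := act_of_eq (coe_idx i)
  have A2 : act (n := n) i (.of (idx' i)) = (.of (idx' i))⁻¹ * .of (idx i) * .of (idx' i) :=
    act_of_succ (coe_idx' i)
  have A3 : act (n := n) i (.of (idx j)) = .of (idx j) := act_of_other (by simp; omega) (by simp; omega)
  have A4 : act (n := n) i (.of (idx' j)) = .of (idx' j) := act_of_other (by simp; omega) (by simp; omega)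
  have A5 : act (n := n) j (.of (idx i)) = .of (idx i) := act_of_other (by simp; omega) (by simp; omega)
  have A6 : act (n := n) j (.of (idx' i)) = .of (idx' i) := act_of_other (by simp; omega) (by simp; omega)
  have A7 : act (n := n) j (.of (idx j)) = .of (idx' j) := act_of_eq (coe_idx j)
  have A8 : act (n := n) j (.of (idx' j)) = (.of (idx' j))⁻¹ * .of (idx j) * .of (idx' j) :=
    act_of_succ (coe_idx' j)
  apply mulaut_ext
  intro k
  simp only [MulAut.mul_apply]
  by_cases h1 : (k : ℕ) = i
  · rw [fin_eq_of_val (l := idx i) h1]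
    simp only [map_mul, map_inv, A1, A2, A3, A4, A5, A6, A7, A8]
  · by_cases h2 : (k : ℕ) = (i : ℕ) + 1
    · rw [fin_eq_of_val (l := idx' i) h2]
      simp only [map_mul, map_inv, A1, A2, A3, A4, A5, A6, A7, A8]
    · by_cases h3 : (k : ℕ) = (j : ℕ)
      · rw [fin_eq_of_val (l := idx j) h3]
        simp only [map_mul, map_inv, A1, A2, A3, A4, A5, A6, A7, A8]
      · by_cases h4 : (k : ℕ) = (j : ℕ) + 1
        · rw [fin_eq_of_val (l := idx' j) h4]
          simp only [map_mul, map_inv, A1, A2, A3, A4, A5, A6, A7, A8]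
        · have B1 : act (n := n) i (.of k) = .of k := act_of_other h1 h2
          have B2 : act (n := n) j (.of k) = .of k := act_of_other h3 h4
          simp only [B1, B2]

/-- The action of the braid group on the free group. -/
def bAct (n : ℕ) : BrGroup (n - 1) →* MulAut (FreeGroup (Fin n)) :=
  PresentedGroup.toGroup (f := act) (by
    rintro r (⟨i, j, hij, rfl⟩ | ⟨i, j, hij, rfl⟩) <;>
      simp only [map_mul, map_inv, FreeGroup.lift_apply_of] <;>
      rw [mul_inv_eq_one]
    · exact act_braid hij
    · exact act_comm hij)

@[simp] lemma bAct_of (i : Fin (n - 1)) : bAct n (PresentedGroup.of i) = act i :=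
  PresentedGroup.toGroup.of _


/-! ### Relations in `B1 n` -/

lemma presented_mk_rel {α : Type*} {rels : Set (FreeGroup α)} {r : FreeGroup α} (h : r ∈ rels) :
    PresentedGroup.mk rels r = 1 :=
  (QuotientGroup.eq_one_iff r).mpr (Subgroup.subset_normalClosure h)

@[simp] lemma presented_mk_of {α : Type*} {rels : Set (FreeGroup α)} (x : α) :
    PresentedGroup.mk rels (.of x) = PresentedGroup.of x := rfl

lemma relB_braid (i j : Fin (n - 1)) (h : (i : ℕ) + 1 = (j : ℕ)) :
    (PresentedGroup.of (some i) : B1 n) * .of (some j) * .of (some i) =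
      .of (some j) * .of (some i) * .of (some j) := by
  have := presented_mk_rel (rels := bRels n) (Or.inl ⟨i, j, h, rfl⟩)
  simpa only [map_mul, map_inv, presented_mk_of, mul_inv_eq_one] using this

lemma relB_comm (i j : Fin (n - 1)) (h : (i : ℕ) + 1 < (j : ℕ)) :
    (PresentedGroup.of (some i) : B1 n) * .of (some j) = .of (some j) * .of (some i) := by
  have := presented_mk_rel (rels := bRels n) (Or.inr (Or.inl ⟨i, j, h, rfl⟩))
  simpa only [map_mul, map_inv, presented_mk_of, mul_inv_eq_one] using this

lemma relB_t (i : Fin (n - 1)) (h : (i : ℕ) = 0) :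
    (PresentedGroup.of (none : BGen n) : B1 n) * .of (some i) * .of none * .of (some i) =
      .of (some i) * .of none * .of (some i) * .of none := by
  have := presented_mk_rel (rels := bRels n) (Or.inr (Or.inr (Or.inl ⟨i, h, rfl⟩)))
  simpa only [map_mul, map_inv, presented_mk_of, mul_inv_eq_one] using this

lemma relB_tcomm (i : Fin (n - 1)) (h : 0 < (i : ℕ)) :
    (PresentedGroup.of (none : BGen n) : B1 n) * .of (some i) =
      .of (some i) * .of none := by
  have := presented_mk_rel (rels := bRels n) (Or.inr (Or.inr (Or.inr ⟨i, h, rfl⟩)))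
  simpa only [map_mul, map_inv, presented_mk_of, mul_inv_eq_one] using this

lemma sigB_of (k : ℕ) (h1 : 1 ≤ k) (h2 : k ≤ n - 1) :
    sigB n k = PresentedGroup.of (some ⟨k - 1, by omega⟩) := dif_pos ⟨h1, h2⟩

lemma sigB_junk (k : ℕ) (h : ¬(1 ≤ k ∧ k ≤ n - 1)) : sigB n k = 1 := dif_neg h

lemma tB_def : tB n = PresentedGroup.of (none : BGen n) := rfl

lemma sig_braid (k : ℕ) (h1 : 1 ≤ k) (h2 : k + 1 ≤ n - 1) :
    sigB n k * sigB n (k + 1) * sigB n k = sigB n (k + 1) * sigB n k * sigB n (k + 1) := by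
  rw [sigB_of k h1 (by omega), sigB_of (k + 1) (by omega) h2]
  exact relB_braid _ _ (by simp; omega)

lemma sig_comm' (k l : ℕ) (h : k + 1 < l) :
    Commute (sigB n k) (sigB n l) := by
  by_cases hl : 1 ≤ l ∧ l ≤ n - 1
  · by_cases hk : 1 ≤ k ∧ k ≤ n - 1
    · rw [sigB_of k hk.1 hk.2, sigB_of l hl.1 hl.2]
      exact relB_comm _ _ (by simp; omega)
    · rw [sigB_junk k hk]; exact Commute.one_left _
  · rw [sigB_junk l hl]; exact Commute.one_right _

lemma t_sig_comm (k : ℕ) (h : 2 ≤ k) : Commute (tB n) (sigB n k) := by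
  by_cases hk : 1 ≤ k ∧ k ≤ n - 1
  · rw [sigB_of k hk.1 hk.2, tB_def]
    exact relB_tcomm _ (by simp; omega)
  · rw [sigB_junk k hk]; exact Commute.one_right _

lemma sig_tp_comm_far (j k : ℕ) (h : j + 2 ≤ k) : Commute (sigB n k) (tpB n j) := by
  induction j generalizing k with
  | zero => exact (t_sig_comm k (by omega)).symm
  | succ j IH =>
    have c1 : Commute (sigB n k) (sigB n (j + 1)) := (sig_comm' (j + 1) k (by omega)).symm
    have c2 : Commute (sigB n k) (tpB n j) := IH k (by omega)
    show Commute (sigB n k) (sigB n (j + 1) * tpB n j * (sigB n (j + 1))⁻¹)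
    exact (c1.mul_right c2).mul_right c1.inv_right

lemma commute_of_conj {G : Type*} [Group G] {x y : G} (h : x * y * x⁻¹ = y) : Commute x y := by
  have h2 : x * y = y * x := by
    calc x * y = (x * y * x⁻¹) * x := by group
      _ = y * x := by rw [h]
  exact h2

lemma conj_conj_comm {G : Type*} [Group G] {a b t : G} (hbr : a * b * a = b * a * b)
    (hc : Commute b t) : Commute a (b * (a * t * a⁻¹) * b⁻¹) := by
  apply commute_of_conj
  calc a * (b * (a * t * a⁻¹) * b⁻¹) * a⁻¹ = (a * b * a) * t * (a * b * a)⁻¹ := by group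
    _ = (b * a * b) * t * (b * a * b)⁻¹ := by rw [hbr]
    _ = b * a * ((b * t) * b⁻¹) * a⁻¹ * b⁻¹ := by group
    _ = b * a * ((t * b) * b⁻¹) * a⁻¹ * b⁻¹ := by rw [hc.eq]
    _ = b * (a * t * a⁻¹) * b⁻¹ := by group

lemma sig_tp_comm_near (k : ℕ) (hk : 1 ≤ k) :
    ∀ j, k + 1 ≤ j → j ≤ n - 1 → Commute (sigB n k) (tpB n j) := by
  intro j
  induction j with
  | zero => omega
  | succ j IH =>
    intro hj hjn
    rcases Nat.lt_or_ge (k + 1) (j + 1) with hlt | hge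
    · -- step case : j ≥ k+1
      have c1 : Commute (sigB n k) (sigB n (j + 1)) := sig_comm' k (j + 1) (by omega)
      have c2 : Commute (sigB n k) (tpB n j) := IH (by omega) (by omega)
      show Commute (sigB n k) (sigB n (j + 1) * tpB n j * (sigB n (j + 1))⁻¹)
      exact (c1.mul_right c2).mul_right c1.inv_right
    · -- base case : j + 1 = k + 1, i.e. j = k
      have hjk : j = k := by omega
      subst hjk
      obtain ⟨m, rfl⟩ : ∃ m, j = m + 1 := ⟨j - 1, by omega⟩
      have hbr : sigB n (m + 1) * sigB n (m + 2) * sigB n (m + 1) =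
          sigB n (m + 2) * sigB n (m + 1) * sigB n (m + 2) := sig_braid (m + 1) (by omega) (by omega)
      have hc : Commute (sigB n (m + 2)) (tpB n m) := sig_tp_comm_far m (m + 2) (by omega)
      show Commute (sigB n (m + 1))
        (sigB n (m + 2) * (sigB n (m + 1) * tpB n m * (sigB n (m + 1))⁻¹) * (sigB n (m + 2))⁻¹)
      exact conj_conj_comm hbr hc

lemma Rstep {G : Type*} [Group G] {a b t : G} (hbr : a * b * a = b * a * b) (hc : Commute b t)
    (hR : a * t * a * t = t * a * t * a) :
    b * (a * t * a⁻¹) * b * (a * t * a⁻¹) = (a * t * a⁻¹) * b * (a * t * a⁻¹) * b := by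
  have h1 : a⁻¹ * b * a = b * a * b⁻¹ := by
    calc a⁻¹ * b * a = a⁻¹ * (b * a * b) * b⁻¹ := by group
      _ = a⁻¹ * (a * b * a) * b⁻¹ := by rw [hbr]
      _ = b * a * b⁻¹ := by group
  have hcinv : b⁻¹ * t = t * b⁻¹ := (hc.inv_left).eq
  calc b * (a * t * a⁻¹) * b * (a * t * a⁻¹)
      = b * a * t * (a⁻¹ * b * a) * t * a⁻¹ := by group
    _ = b * a * t * (b * a * b⁻¹) * t * a⁻¹ := by rw [h1]
    _ = b * a * (t * b) * a * (b⁻¹ * t) * a⁻¹ := by group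
    _ = b * a * (b * t) * a * (b⁻¹ * t) * a⁻¹ := by rw [← hc.eq]
    _ = b * a * (b * t) * a * (t * b⁻¹) * a⁻¹ := by rw [hcinv]
    _ = (b * a * b) * (t * a * t) * (b⁻¹ * a⁻¹) := by group
    _ = (a * b * a) * (t * a * t) * (b⁻¹ * a⁻¹) := by rw [← hbr]
    _ = a * b * (a * t * a * t) * (b⁻¹ * a⁻¹) := by group
    _ = a * b * (t * a * t * a) * (b⁻¹ * a⁻¹) := by rw [hR]
    _ = a * (b * t) * a * t * (a * b⁻¹ * a⁻¹) := by group
    _ = a * (t * b) * a * t * (a * b⁻¹ * a⁻¹) := by rw [hc.eq]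
    _ = a * (t * b) * a * t * (b⁻¹ * a⁻¹ * b) := by
        have h2 : b⁻¹ * a⁻¹ * b = a * b⁻¹ * a⁻¹ := by
          have hbr' : a⁻¹ * b⁻¹ * a⁻¹ = b⁻¹ * a⁻¹ * b⁻¹ := by
            calc a⁻¹ * b⁻¹ * a⁻¹ = (a * b * a)⁻¹ := by group
              _ = (b * a * b)⁻¹ := by rw [hbr]
              _ = b⁻¹ * a⁻¹ * b⁻¹ := by group
          calc b⁻¹ * a⁻¹ * b = a * (a⁻¹ * b⁻¹ * a⁻¹) * b := by group
            _ = a * (b⁻¹ * a⁻¹ * b⁻¹) * b := by rw [hbr']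
            _ = a * b⁻¹ * a⁻¹ := by group
        rw [← h2]
    _ = a * t * (b * a) * (t * b⁻¹) * (a⁻¹ * b) := by group
    _ = a * t * (b * a) * (b⁻¹ * t) * (a⁻¹ * b) := by rw [← hcinv]
    _ = a * t * (b * a * b⁻¹) * t * (a⁻¹ * b) := by group
    _ = a * t * (a⁻¹ * b * a) * t * (a⁻¹ * b) := by rw [← h1]
    _ = (a * t * a⁻¹) * b * (a * t * a⁻¹) * b := by group

lemma rel_R : ∀ i : ℕ, i + 1 ≤ n - 1 →
    sigB n (i + 1) * tpB n i * sigB n (i + 1) * tpB n i =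
      tpB n i * sigB n (i + 1) * tpB n i * sigB n (i + 1) := by
  intro i
  induction i with
  | zero =>
    intro h
    have := relB_t (n := n) ⟨0, by omega⟩ rfl
    rw [← tB_def, ← sigB_of 1 le_rfl (by omega)] at this
    exact this.symm
  | succ i IH =>
    intro h
    have hbr : sigB n (i + 1) * sigB n (i + 2) * sigB n (i + 1) =
        sigB n (i + 2) * sigB n (i + 1) * sigB n (i + 2) := sig_braid (i + 1) (by omega) (by omega)
    have hc : Commute (sigB n (i + 2)) (tpB n i) := sig_tp_comm_far i (i + 2) (by omega)
    have hR := IH (by omega)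
    show sigB n (i + 2) * (sigB n (i + 1) * tpB n i * (sigB n (i + 1))⁻¹) * sigB n (i + 2) *
        (sigB n (i + 1) * tpB n i * (sigB n (i + 1))⁻¹) = _
    exact Rstep hbr hc hR

lemma conj_R {G : Type*} [Group G] {a t : G} (hR : a * t * a * t = t * a * t * a) :
    a * (a * t * a⁻¹) * a⁻¹ = (a * t * a⁻¹)⁻¹ * t * (a * t * a⁻¹) := by
  have key : (a * t * a⁻¹) * (a * (a * t * a⁻¹) * a⁻¹) = t * (a * t * a⁻¹) := by
    calc (a * t * a⁻¹) * (a * (a * t * a⁻¹) * a⁻¹) = (a * t * a * t) * (a⁻¹ * a⁻¹) := by group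
      _ = (t * a * t * a) * (a⁻¹ * a⁻¹) := by rw [hR]
      _ = t * (a * t * a⁻¹) := by group
  calc a * (a * t * a⁻¹) * a⁻¹
      = (a * t * a⁻¹)⁻¹ * ((a * t * a⁻¹) * (a * (a * t * a⁻¹) * a⁻¹)) := by group
    _ = (a * t * a⁻¹)⁻¹ * (t * (a * t * a⁻¹)) := by rw [key]
    _ = (a * t * a⁻¹)⁻¹ * t * (a * t * a⁻¹) := by group


/-! ### The homomorphism `Φ : B1 n →* FreeGroup (Fin n) ⋊ BrGroup (n-1)` -/

open SemidirectProduct in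
/-- Images of the generators of `B1 n`. -/
def phiFun (hn : 1 ≤ n) : BGen n → (FreeGroup (Fin n) ⋊[bAct n] BrGroup (n - 1))
  | none => inl (.of ⟨0, hn⟩)
  | some i => inr (.of i)

open SemidirectProduct in
lemma inr_mul_inl (g : BrGroup (n - 1)) (x : FreeGroup (Fin n)) :
    (inr g : FreeGroup (Fin n) ⋊[bAct n] BrGroup (n - 1)) * inl x =
      inl (bAct n g x) * inr g := by
  rw [inl_aut, mul_assoc (inr g * inl x) (inr g⁻¹) (inr g), ← map_mul, inv_mul_cancel,
    map_one, mul_one]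

open SemidirectProduct in
lemma inl_inr_key (g : BrGroup (n - 1)) (u v : FreeGroup (Fin n)) :
    (inl u : FreeGroup (Fin n) ⋊[bAct n] BrGroup (n - 1)) * inr g * inl v * inr g =
      inl (u * bAct n g v) * inr (g * g) := by
  calc inl u * inr g * inl v * inr g
      = inl u * (inr g * inl v) * inr g := by group
    _ = inl u * (inl (bAct n g v) * inr g) * inr g := by rw [inr_mul_inl]
    _ = (inl u * inl (bAct n g v)) * ((inr g : FreeGroup (Fin n) ⋊[bAct n] BrGroup (n - 1)) *
          inr g) := by group
    _ = inl (u * bAct n g v) * inr (g * g) := by rw [← map_mul, ← map_mul]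

open SemidirectProduct in
/-- The isomorphism `B1 n → FreeGroup (Fin n) ⋊ BrGroup (n-1)`, as a hom. -/
def Phi (hn : 1 ≤ n) : B1 n →* (FreeGroup (Fin n) ⋊[bAct n] BrGroup (n - 1)) :=
  PresentedGroup.toGroup (f := phiFun hn) (by
    rintro r (⟨i, j, hij, rfl⟩ | ⟨i, j, hij, rfl⟩ | ⟨i, hi, rfl⟩ | ⟨i, hi, rfl⟩) <;>
        simp only [map_mul, map_inv, FreeGroup.lift_apply_of, phiFun] <;> rw [mul_inv_eq_one]
    · -- braid relation, lands in the `inr` copy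
      simp only [← map_mul]
      congr 1
      have := presented_mk_rel (rels := braidRels (n - 1)) (Or.inl ⟨i, j, hij, rfl⟩)
      simpa only [map_mul, map_inv, presented_mk_of, mul_inv_eq_one] using this
    · simp only [← map_mul]
      congr 1
      have := presented_mk_rel (rels := braidRels (n - 1)) (Or.inr ⟨i, j, hij, rfl⟩)
      simpa only [map_mul, map_inv, presented_mk_of, mul_inv_eq_one] using this
    · -- the type `B` relation
      have h0 : ((⟨0, hn⟩ : Fin n) : ℕ) = (i : ℕ) := by
        rw [show ((⟨0, hn⟩ : Fin n) : ℕ) = 0 from rfl]; omega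
      have hidx : idx i = (⟨0, hn⟩ : Fin n) := fin_eq_of_val (k := idx i) (l := ⟨0, hn⟩) hi
      have E1 : bAct n (PresentedGroup.of i) (FreeGroup.of (⟨0, hn⟩ : Fin n)) =
          .of (idx' i) := by rw [bAct_of]; exact act_of_eq h0
      have E2 : bAct n (PresentedGroup.of i) (FreeGroup.of (idx' i)) =
          (FreeGroup.of (idx' i))⁻¹ * .of (⟨0, hn⟩ : Fin n) * .of (idx' i) := by
        rw [bAct_of, act_of_succ (coe_idx' i), hidx]
      rw [inl_inr_key]
      refine Eq.symm ?_
      calc inr (PresentedGroup.of i) * inl (FreeGroup.of (⟨0, hn⟩ : Fin n)) *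
              inr (PresentedGroup.of i) * inl (FreeGroup.of (⟨0, hn⟩ : Fin n))
          = (inr (PresentedGroup.of i) * inl (FreeGroup.of (⟨0, hn⟩ : Fin n))) *
              ((inr (PresentedGroup.of i) : FreeGroup (Fin n) ⋊[bAct n] BrGroup (n - 1)) *
                inl (FreeGroup.of (⟨0, hn⟩ : Fin n))) := by group
        _ = (inl (bAct n (PresentedGroup.of i) (FreeGroup.of (⟨0, hn⟩ : Fin n))) *
              inr (PresentedGroup.of i)) *
            (inl (bAct n (PresentedGroup.of i) (FreeGroup.of (⟨0, hn⟩ : Fin n))) *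
              inr (PresentedGroup.of i)) := by rw [inr_mul_inl]
        _ = inl (bAct n (PresentedGroup.of i) (FreeGroup.of (⟨0, hn⟩ : Fin n))) *
              inr (PresentedGroup.of i) *
              inl (bAct n (PresentedGroup.of i) (FreeGroup.of (⟨0, hn⟩ : Fin n))) *
              inr (PresentedGroup.of i) := by group
        _ = inl (bAct n (PresentedGroup.of i) (FreeGroup.of (⟨0, hn⟩ : Fin n)) *
              bAct n (PresentedGroup.of i)
                (bAct n (PresentedGroup.of i) (FreeGroup.of (⟨0, hn⟩ : Fin n)))) *
              inr (PresentedGroup.of i * PresentedGroup.of i) := inl_inr_key _ _ _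
        _ = inl (FreeGroup.of (⟨0, hn⟩ : Fin n) *
              bAct n (PresentedGroup.of i) (FreeGroup.of (⟨0, hn⟩ : Fin n))) *
              inr (PresentedGroup.of i * PresentedGroup.of i) := by
            rw [E1, E2, show FreeGroup.of (idx' i) * ((FreeGroup.of (idx' i))⁻¹ *
              FreeGroup.of (⟨0, hn⟩ : Fin n) * FreeGroup.of (idx' i)) =
              FreeGroup.of (⟨0, hn⟩ : Fin n) * FreeGroup.of (idx' i) from by group]
    · -- `t` commutes with `σ_i`, `i ≥ 2`
      have E : act i (.of (⟨0, hn⟩ : Fin n)) = .of (⟨0, hn⟩ : Fin n) :=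
        act_of_other (show (0 : ℕ) ≠ (i : ℕ) by omega) (show (0 : ℕ) ≠ (i : ℕ) + 1 by omega)
      rw [inr_mul_inl, bAct_of, E])

lemma Phi_of_none (hn : 1 ≤ n) :
    Phi hn (PresentedGroup.of (none : BGen n)) = SemidirectProduct.inl (.of ⟨0, hn⟩) :=
  PresentedGroup.toGroup.of _

lemma Phi_of_some (hn : 1 ≤ n) (i : Fin (n - 1)) :
    Phi hn (PresentedGroup.of (some i : BGen n)) = SemidirectProduct.inr (.of i) :=
  PresentedGroup.toGroup.of _

lemma Phi_tp (hn : 1 ≤ n) : ∀ j, (hj : j < n) →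
    Phi hn (tpB n j) = SemidirectProduct.inl (.of ⟨j, hj⟩) := by
  intro j
  induction j with
  | zero => intro hj; exact Phi_of_none hn
  | succ j IH =>
    intro hj
    have hjn : j + 1 ≤ n - 1 := by omega
    show Phi hn (sigB n (j + 1) * tpB n j * (sigB n (j + 1))⁻¹) = _
    rw [sigB_of (j + 1) (by omega) hjn]
    simp only [map_mul, map_inv, Phi_of_some, IH (by omega)]
    rw [← map_inv SemidirectProduct.inr, ← SemidirectProduct.inl_aut]
    congr 1
    rw [bAct_of]
    have : ((⟨j, by omega⟩ : Fin n) : ℕ) = ((⟨j + 1 - 1, by omega⟩ : Fin (n - 1)) : ℕ) := by simp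
    rw [act_of_eq this]
    congr 1


/-! ### The homomorphism `Ψ : FreeGroup (Fin n) ⋊ BrGroup (n-1) →* B1 n` -/

/-- The free part of `Ψ`. -/
def PsiF : FreeGroup (Fin n) →* B1 n := FreeGroup.lift fun i : Fin n => tpB n (i : ℕ)

@[simp] lemma PsiF_of (k : Fin n) : PsiF (FreeGroup.of k) = tpB n (k : ℕ) := FreeGroup.lift_apply_of

/-- The braid part of `Ψ`. -/
def PsiB : BrGroup (n - 1) →* B1 n :=
  PresentedGroup.toGroup (f := fun i : Fin (n - 1) => sigB n ((i : ℕ) + 1)) (by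
    rintro r (⟨i, j, hij, rfl⟩ | ⟨i, j, hij, rfl⟩) <;>
        simp only [map_mul, map_inv, FreeGroup.lift_apply_of] <;> rw [mul_inv_eq_one]
    · rw [show (j : ℕ) + 1 = (i : ℕ) + 1 + 1 by omega]
      exact sig_braid ((i : ℕ) + 1) (by omega) (by have := j.isLt; omega)
    · exact (sig_comm' ((i : ℕ) + 1) ((j : ℕ) + 1) (by omega)).eq)

@[simp] lemma PsiB_of (i : Fin (n - 1)) :
    PsiB (PresentedGroup.of i) = sigB n ((i : ℕ) + 1) := PresentedGroup.toGroup.of _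

lemma psi_compat_gen (i : Fin (n - 1)) :
    ∀ x : FreeGroup (Fin n),
      PsiF (act i x) = sigB n ((i : ℕ) + 1) * PsiF x * (sigB n ((i : ℕ) + 1))⁻¹ := by
  intro x
  induction x using FreeGroup.induction_on with
  | C1 => simp
  | of k =>
    show PsiF (act i (FreeGroup.of k)) = sigB n ((i : ℕ) + 1) * PsiF (FreeGroup.of k) *
      (sigB n ((i : ℕ) + 1))⁻¹
    by_cases h1 : (k : ℕ) = (i : ℕ)
    · rw [act_of_eq h1, PsiF_of, PsiF_of, coe_idx', h1]
      rfl
    · by_cases h2 : (k : ℕ) = (i : ℕ) + 1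
      · rw [act_of_succ h2]
        simp only [map_mul, map_inv, PsiF_of, coe_idx, coe_idx', h2]
        have hle : (i : ℕ) + 1 ≤ n - 1 := by have := i.isLt; omega
        exact (conj_R (rel_R (i : ℕ) hle)).symm
      · rw [act_of_other h1 h2, PsiF_of]
        have hc : Commute (sigB n ((i : ℕ) + 1)) (tpB n (k : ℕ)) := by
          rcases Nat.lt_or_ge (k : ℕ) (i : ℕ) with hlt | hge
          · exact sig_tp_comm_far (k : ℕ) ((i : ℕ) + 1) (by omega)
          · exact sig_tp_comm_near ((i : ℕ) + 1) (by omega) (k : ℕ) (by omega)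
              (by have := k.isLt; omega)
        rw [hc.eq]
        group
  | inv_of k ih =>
    simp only [map_inv]
    rw [ih]
    group
  | mul x y ihx ihy =>
    simp only [map_mul]
    rw [ihx, ihy]
    group

/-- The subgroup of elements compatible with `Ψ`. -/
def compatSub : Subgroup (BrGroup (n - 1)) where
  carrier := {g | ∀ x : FreeGroup (Fin n), PsiF (bAct n g x) = PsiB g * PsiF x * (PsiB g)⁻¹}
  one_mem' := by intro x; simp
  mul_mem' := by
    intro a b ha hb x
    have : bAct n (a * b) x = bAct n a (bAct n b x) := by rw [map_mul]; rfl
    rw [this, ha, hb, map_mul]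
    group
  inv_mem' := by
    intro a ha x
    have hfix : bAct n a (bAct n a⁻¹ x) = x := by
      rw [← MulAut.mul_apply, ← map_mul, mul_inv_cancel, map_one]
      rfl
    have h := ha (bAct n a⁻¹ x)
    rw [hfix] at h
    have h2 : PsiF (bAct n a⁻¹ x) = (PsiB a)⁻¹ * PsiF x * PsiB a := by rw [h]; group
    rw [h2, map_inv]
    group

lemma psi_compat (g : BrGroup (n - 1)) :
    ∀ x : FreeGroup (Fin n), PsiF (bAct n g x) = PsiB g * PsiF x * (PsiB g)⁻¹ := by
  refine PresentedGroup.generated_by _ compatSub (fun i => ?_) g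
  intro x
  rw [bAct_of, PsiB_of]
  exact psi_compat_gen i x

/-- The inverse homomorphism `Ψ`. -/
def Psi : (FreeGroup (Fin n) ⋊[bAct n] BrGroup (n - 1)) →* B1 n :=
  SemidirectProduct.lift PsiF PsiB (by
    intro g
    ext x
    simp only [MonoidHom.comp_apply, MulEquiv.coe_toMonoidHom, MulAut.conj_apply]
    exact psi_compat g (FreeGroup.of x))

@[simp] lemma Psi_inl (x : FreeGroup (Fin n)) : Psi (SemidirectProduct.inl x) = PsiF x :=
  SemidirectProduct.lift_inl _ _ _ _

@[simp] lemma Psi_inr (g : BrGroup (n - 1)) : Psi (SemidirectProduct.inr g) = PsiB g :=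
  SemidirectProduct.lift_inr _ _ _ _

/-! ### The two composites are the identity -/

lemma psi_phi (hn : 1 ≤ n) : Psi.comp (Phi hn) = MonoidHom.id (B1 n) := by
  ext x
  match x with
  | none =>
    show Psi (Phi hn (PresentedGroup.of none)) = PresentedGroup.of none
    rw [Phi_of_none, Psi_inl, PsiF_of]
    rfl
  | some i =>
    show Psi (Phi hn (PresentedGroup.of (some i))) = PresentedGroup.of (some i)
    rw [Phi_of_some, Psi_inr, PsiB_of, sigB_of ((i : ℕ) + 1) (by omega)
      (by have := i.isLt; omega)]
    congr 2

lemma psi_phi_apply (hn : 1 ≤ n) (w : B1 n) : Psi (Phi hn w) = w :=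
  DFunLike.congr_fun (psi_phi hn) w

lemma phi_psiF (hn : 1 ≤ n) : (Phi hn).comp PsiF = SemidirectProduct.inl := by
  apply FreeGroup.ext_hom
  intro k
  show Phi hn (PsiF (FreeGroup.of k)) = _
  rw [PsiF_of, Phi_tp hn (k : ℕ) k.isLt]


/-! ### Assembly -/

lemma phi_psiF_apply (hn : 1 ≤ n) (x : FreeGroup (Fin n)) :
    Phi hn (PsiF x) = SemidirectProduct.inl x :=
  DFunLike.congr_fun (phi_psiF hn) x

lemma PsiF_inj (hn : 1 ≤ n) : Function.Injective (PsiF (n := n)) := by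
  intro a b hab
  have h := congrArg (Phi hn) hab
  rw [phi_psiF_apply hn, phi_psiF_apply hn] at h
  exact SemidirectProduct.inl_injective h

lemma range_PsiF : (PsiF (n := n)).range = Pn n := by
  rw [MonoidHom.range_eq_map, ← FreeGroup.closure_range_of (Fin n), MonoidHom.map_closure]
  unfold Pn
  congr 1
  rw [← Set.range_comp]
  exact congrArg Set.range (funext fun i => PsiF_of i)

lemma Pn_eq_ker (hn : 1 ≤ n) :
    Pn n = MonoidHom.ker (SemidirectProduct.rightHom.comp (Phi hn)) := by
  apply le_antisymm
  · apply (Subgroup.closure_le _).mpr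
    rintro x ⟨i, rfl⟩
    show _ ∈ MonoidHom.ker _
    rw [MonoidHom.mem_ker, MonoidHom.comp_apply, Phi_tp hn (i : ℕ) i.isLt,
      SemidirectProduct.rightHom_inl]
  · intro w hw
    rw [MonoidHom.mem_ker, MonoidHom.comp_apply] at hw
    have hmem : Phi hn w ∈ (SemidirectProduct.inl :
        FreeGroup (Fin n) →* FreeGroup (Fin n) ⋊[bAct n] BrGroup (n - 1)).range := by
      rw [SemidirectProduct.range_inl_eq_ker_rightHom]
      exact hw
    obtain ⟨x, hx⟩ := hmem
    have hwx : w = PsiF x := by rw [← psi_phi_apply hn w, ← hx, Psi_inl]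
    rw [hwx, ← range_PsiF]
    exact ⟨x, rfl⟩

lemma Phi_mem_Pn (hn : 1 ≤ n) {u : B1 n} (hu : u ∈ Pn n) :
    Phi hn u ∈ (SemidirectProduct.inl :
      FreeGroup (Fin n) →* FreeGroup (Fin n) ⋊[bAct n] BrGroup (n - 1)).range := by
  have hle : Pn n ≤ Subgroup.comap (Phi hn) (SemidirectProduct.inl :
      FreeGroup (Fin n) →* FreeGroup (Fin n) ⋊[bAct n] BrGroup (n - 1)).range := by
    apply (Subgroup.closure_le _).mpr
    rintro x ⟨i, rfl⟩
    exact ⟨.of ⟨(i : ℕ), i.isLt⟩, (Phi_tp hn (i : ℕ) i.isLt).symm⟩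
  exact hle hu

lemma Phi_mem_Bn (hn : 1 ≤ n) {u : B1 n} (hu : u ∈ BnSub n) :
    Phi hn u ∈ (SemidirectProduct.inr :
      BrGroup (n - 1) →* FreeGroup (Fin n) ⋊[bAct n] BrGroup (n - 1)).range := by
  have hle : BnSub n ≤ Subgroup.comap (Phi hn) (SemidirectProduct.inr :
      BrGroup (n - 1) →* FreeGroup (Fin n) ⋊[bAct n] BrGroup (n - 1)).range := by
    apply (Subgroup.closure_le _).mpr
    rintro x ⟨k, hk1, hk2, rfl⟩
    refine ⟨.of ⟨k - 1, by omega⟩, ?_⟩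
    rw [sigB_of k hk1 hk2, Phi_of_some]
  exact hle hu

lemma PsiB_mem (s : BrGroup (n - 1)) : PsiB s ∈ BnSub n := by
  refine PresentedGroup.generated_by _ (Subgroup.comap PsiB (BnSub n)) (fun i => ?_) s
  show PsiB (PresentedGroup.of i) ∈ BnSub n
  rw [PsiB_of]
  exact Subgroup.subset_closure ⟨(i : ℕ) + 1, by omega, by have := i.isLt; omega, rfl⟩

lemma trivial_inter (hn : 1 ≤ n) (u : B1 n) (h1 : u ∈ Pn n) (h2 : u ∈ BnSub n) : u = 1 := by
  obtain ⟨x, hx⟩ := Phi_mem_Pn hn h1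
  obtain ⟨s, hs⟩ := Phi_mem_Bn hn h2
  have hxl : x = 1 := by
    have h := congrArg SemidirectProduct.left (hx.trans hs.symm)
    simpa using h
  have hone : Phi hn u = 1 := by rw [← hx, hxl, map_one]
  calc u = Psi (Phi hn u) := (psi_phi_apply hn u).symm
    _ = 1 := by rw [hone, map_one]

/-- `P_{1,n}` is a normal subgroup of `B_{1,n}`; it is free, freely
generated by `t, t'_1, …, t'_{n-1}` (i.e. the homomorphism from the free group on `n`
letters sending the `i`-th letter to `t'_i` is injective with image `P_{1,n}`); and
`B_{1,n} = P_{1,n} ⋊ B_n` is an internal semidirect product: every `w ∈ B_{1,n}` is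
uniquely a product `w = v · σ` with `v ∈ P_{1,n}` and `σ ∈ B_n`. -/
theorem statement_0 (n : ℕ) (hn : 1 ≤ n) :
    (Pn n).Normal ∧
    Function.Injective ⇑(FreeGroup.lift fun i : Fin n => tpB n (i : ℕ)) ∧
    MonoidHom.range (FreeGroup.lift fun i : Fin n => tpB n (i : ℕ)) = Pn n ∧
    ∀ w : B1 n, ∃! p : Pn n × BnSub n, w = (p.1 : B1 n) * (p.2 : B1 n) := by
  refine ⟨?_, PsiF_inj hn, range_PsiF, ?_⟩
  · rw [Pn_eq_ker hn]
    exact MonoidHom.normal_ker _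
  · intro w
    have hv₀ : PsiF (Phi hn w).left ∈ Pn n := by
      rw [← range_PsiF]; exact ⟨_, rfl⟩
    have hs₀ : PsiB (Phi hn w).right ∈ BnSub n := PsiB_mem _
    have hw0 : w = PsiF (Phi hn w).left * PsiB (Phi hn w).right := by
      calc w = Psi (Phi hn w) := (psi_phi_apply hn w).symm
        _ = Psi (SemidirectProduct.inl (Phi hn w).left *
              SemidirectProduct.inr (Phi hn w).right) := by
            rw [SemidirectProduct.inl_left_mul_inr_right]
        _ = PsiF (Phi hn w).left * PsiB (Phi hn w).right := by rw [map_mul, Psi_inl, Psi_inr]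
    refine ⟨(⟨_, hv₀⟩, ⟨_, hs₀⟩), hw0, ?_⟩
    rintro ⟨⟨v, hv⟩, ⟨s, hs⟩⟩ hp
    have hp' : w = v * s := hp
    have key : (PsiF (Phi hn w).left)⁻¹ * v = PsiB (Phi hn w).right * s⁻¹ := by
      calc (PsiF (Phi hn w).left)⁻¹ * v
          = (PsiF (Phi hn w).left)⁻¹ * (v * s) * s⁻¹ := by group
        _ = (PsiF (Phi hn w).left)⁻¹ *
              (PsiF (Phi hn w).left * PsiB (Phi hn w).right) * s⁻¹ := by rw [← hp', ← hw0]
        _ = PsiB (Phi hn w).right * s⁻¹ := by group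
    have hmem1 : (PsiF (Phi hn w).left)⁻¹ * v ∈ Pn n := mul_mem (inv_mem hv₀) hv
    have hmem2 : (PsiF (Phi hn w).left)⁻¹ * v ∈ BnSub n := by
      rw [key]; exact mul_mem hs₀ (inv_mem hs)
    have h1 : (PsiF (Phi hn w).left)⁻¹ * v = 1 := trivial_inter hn _ hmem1 hmem2
    have hveq : v = PsiF (Phi hn w).left := (inv_mul_eq_one.mp h1).symm
    have hseq : s = PsiB (Phi hn w).right := by
      have h2 : PsiB (Phi hn w).right * s⁻¹ = 1 := by rw [← key, h1]
      exact (mul_inv_eq_one.mp h2).symm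
    exact Prod.ext (Subtype.ext hveq) (Subtype.ext hseq)



end KnotTypeB
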